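/- Let M be an n×n matrix over RatFunc ℂ all of whose entries have intDegree ≤ 0, let B be a nonempty proper subset of Fin n with complement I, and set A := (M - X • 1)⁻¹. Then the submatrix A_II is invertible over RatFunc ℂ and the isospectral reduction of the spectral inverse satisfies R(S(M);B) = (A_BB - A_BI * A_II⁻¹ * A_IB) + X • 1, i.e. R(S(M);B) equals the Schur complement of A_II in A plus X • 1. -/

import Mathlib

set_option synthInstance.maxHeartbeats 1000000
set_option maxHeartbeats 1000000

open Matrix Multiplicative

/-- The isospectral reduction of `M` over `B`, with interior index set `I = Bᶜ`:
`R(M;B) = M_BB - M_BI (M_II - X•1)⁻¹ M_IB`. -/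
noncomputable def isoRed {α : Type} [Fintype α] [DecidableEq α]
    (M : Matrix α α (RatFunc ℂ)) (B : Finset α) : Matrix ↥B ↥B (RatFunc ℂ) :=
  M.submatrix (Subtype.val : ↥B → α) (Subtype.val : ↥B → α) -
    M.submatrix (Subtype.val : ↥B → α) (Subtype.val : ↥Bᶜ → α) *
      (M.submatrix (Subtype.val : ↥Bᶜ → α) (Subtype.val : ↥Bᶜ → α) -
        (RatFunc.X : RatFunc ℂ) • 1)⁻¹ *
      M.submatrix (Subtype.val : ↥Bᶜ → α) (Subtype.val : ↥B → α)

/-- The spectral inverse of a square matrix over `RatFunc ℂ`: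
`S(M) = (M - X•1)⁻¹ + X•1`. -/
noncomputable def specInv {α : Type} [Fintype α] [DecidableEq α]
    (M : Matrix α α (RatFunc ℂ)) : Matrix α α (RatFunc ℂ) :=
  (M - (RatFunc.X : RatFunc ℂ) • 1)⁻¹ + (RatFunc.X : RatFunc ℂ) • 1

noncomputable local instance : DecidableEq (RatFunc ℂ) := Classical.decEq _

noncomputable abbrev vv : Valuation (RatFunc ℂ) (WithZero (Multiplicative ℤ)) :=
  FunctionField.inftyValuation ℂ

lemma vv_le_one {x : RatFunc ℂ} (h : x.intDegree ≤ 0) : vv x ≤ 1 := by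
  rcases eq_or_ne x 0 with rfl | hx
  · simp [FunctionField.inftyValuation_apply, FunctionField.inftyValuationDef]
  · rw [show vv x = RatFunc.inftyValuation ℂ x from rfl, RatFunc.inftyValuation_apply, RatFunc.inftyValuation_of_nonzero ℂ hx]
    rw [show (1 : WithZero (Multiplicative ℤ)) = ((ofAdd (0:ℤ) : Multiplicative ℤ) : WithZero (Multiplicative ℤ)) by rfl]
    exact WithZero.exp_le_exp.mpr h

lemma vv_X : vv (RatFunc.X : RatFunc ℂ) = ((ofAdd (1:ℤ) : Multiplicative ℤ) : WithZero (Multiplicative ℤ)) := by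
  rw [show vv RatFunc.X = RatFunc.inftyValuation ℂ RatFunc.X from rfl, RatFunc.inftyValuation_apply,
    RatFunc.inftyValuation_of_nonzero ℂ RatFunc.X_ne_zero,
    RatFunc.intDegree_X]
  rfl

lemma one_lt_ofAdd_one : (1 : WithZero (Multiplicative ℤ)) <
    ((ofAdd (1:ℤ) : Multiplicative ℤ) : WithZero (Multiplicative ℤ)) := by
  rw [show (1 : WithZero (Multiplicative ℤ)) = ((ofAdd (0:ℤ) : Multiplicative ℤ) : WithZero (Multiplicative ℤ)) by rfl]
  rw [WithZero.coe_lt_coe, Multiplicative.ofAdd_lt]; norm_num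

lemma detNeZero {α : Type} [Fintype α] [DecidableEq α]
    (P : Matrix α α (RatFunc ℂ)) (h : ∀ i j, (P i j).intDegree ≤ 0) :
    IsUnit (P - (RatFunc.X : RatFunc ℂ) • 1).det := by
  set N : Matrix α α (RatFunc ℂ) := P - (RatFunc.X : RatFunc ℂ) • 1 with hNdef
  have hNentry : ∀ a b, N a b = P a b - if a = b then (RatFunc.X : RatFunc ℂ) else 0 := by
    intro a b
    simp [hNdef, Matrix.sub_apply, Matrix.smul_apply, Matrix.one_apply, smul_ite]
  have hoff : ∀ a b, a ≠ b → vv (N a b) ≤ 1 := by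
    intro a b hab
    rw [hNentry a b, if_neg hab, sub_zero]
    exact vv_le_one (h a b)
  have hdiag : ∀ a, vv (N a a) =
      ((ofAdd (1:ℤ) : Multiplicative ℤ) : WithZero (Multiplicative ℤ)) := by
    intro a
    rw [hNentry a a, if_pos rfl]
    rw [Valuation.map_sub_eq_of_lt_right _ (by rw [vv_X]; exact lt_of_le_of_lt (vv_le_one (h a a)) one_lt_ofAdd_one)]
    exact vv_X
  have hent : ∀ a b, vv (N a b) ≤ ((ofAdd (1:ℤ) : Multiplicative ℤ) : WithZero (Multiplicative ℤ)) := by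
    intro a b
    rcases eq_or_ne a b with rfl | hab
    · exact (hdiag a).le
    · exact le_trans (hoff a b hab) one_lt_ofAdd_one.le
  set c := Fintype.card α with hc
  set γ : WithZero (Multiplicative ℤ) := ((ofAdd (c:ℤ) : Multiplicative ℤ) : WithZero (Multiplicative ℤ)) with hγ
  have hterm : ∀ σ : Equiv.Perm α,
      vv (Equiv.Perm.sign σ • ∏ i, N (σ i) i) = vv (∏ i, N (σ i) i) := by
    intro σ
    rcases Int.units_eq_one_or (Equiv.Perm.sign σ) with hs | hs <;> rw [hs]
    · rw [one_smul]
    · rw [Units.smul_def, Units.val_neg, Units.val_one, neg_smul, one_smul, Valuation.map_neg]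
  have hid : vv ((1 : Equiv.Perm α).sign • ∏ i, N ((1 : Equiv.Perm α) i) i) = γ := by
    rw [hterm]
    simp only [Equiv.Perm.one_apply]
    rw [map_prod]
    rw [Finset.prod_congr rfl (fun i _ => hdiag i), Finset.prod_const, Finset.card_univ, ← hc]
    rw [← WithZero.coe_pow, ← ofAdd_nsmul, nsmul_eq_mul, mul_one]
  have hne : ∀ σ : Equiv.Perm α, σ ≠ 1 →
      vv (Equiv.Perm.sign σ • ∏ i, N (σ i) i) < γ := by
    intro σ hσ
    rw [hterm]
    obtain ⟨i₀, hi₀⟩ : ∃ i, σ i ≠ i := by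
      by_contra hcon
      push_neg at hcon
      exact hσ (Equiv.ext hcon)
    rw [← Finset.mul_prod_erase _ _ (Finset.mem_univ i₀), Valuation.map_mul]
    have h1 : vv (N (σ i₀) i₀) ≤ 1 := hoff _ _ hi₀
    have h2 : vv (∏ i ∈ Finset.univ.erase i₀, N (σ i) i) ≤
        ((ofAdd ((c - 1 : ℕ) : ℤ) : Multiplicative ℤ) : WithZero (Multiplicative ℤ)) := by
      rw [map_prod]
      calc ∏ i ∈ Finset.univ.erase i₀, vv (N (σ i) i)
          ≤ ∏ _i ∈ Finset.univ.erase i₀,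
            ((ofAdd (1:ℤ) : Multiplicative ℤ) : WithZero (Multiplicative ℤ)) :=
            Finset.prod_le_prod' fun i _ => hent _ _
        _ = _ := by
            rw [Finset.prod_const, Finset.card_erase_of_mem (Finset.mem_univ i₀),
              Finset.card_univ, ← hc, ← WithZero.coe_pow, ← ofAdd_nsmul, nsmul_eq_mul, mul_one]
    calc vv (N (σ i₀) i₀) * vv (∏ i ∈ Finset.univ.erase i₀, N (σ i) i)
        ≤ 1 * ((ofAdd ((c - 1 : ℕ) : ℤ) : Multiplicative ℤ) : WithZero (Multiplicative ℤ)) :=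
          mul_le_mul' h1 h2
      _ < γ := by
          rw [one_mul, hγ]
          have hcpos : 0 < c := Fintype.card_pos_iff.mpr ⟨i₀⟩
          rw [WithZero.coe_lt_coe, Multiplicative.ofAdd_lt]; omega
  have hv : vv N.det = γ := by
    rw [Matrix.det_apply, ← Finset.add_sum_erase _ _ (Finset.mem_univ (1 : Equiv.Perm α))]
    rw [Valuation.map_add_eq_of_lt_left]
    · exact hid
    · rw [hid]
      exact Valuation.map_sum_lt _ (by simp [hγ]) fun σ hσ =>
        hne σ (Finset.ne_of_mem_erase hσ)
  have : N.det ≠ 0 := by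
    intro h0
    rw [h0, map_zero] at hv
    exact (WithZero.zero_ne_coe hv).elim
  exact isUnit_iff_ne_zero.mpr this

noncomputable def sumEquiv {α : Type} [Fintype α] [DecidableEq α] (B : Finset α) :
    (↥B ⊕ ↥(Bᶜ : Finset α)) ≃ α :=
  (Equiv.sumCongr (Equiv.refl _) (Equiv.subtypeEquivRight fun _ => Finset.mem_compl)).trans
    (Equiv.sumCompl (· ∈ B))

lemma submatrix_sumEquiv {α K : Type} [Fintype α] [DecidableEq α] (B : Finset α) (P : Matrix α α K) :
    P.submatrix (sumEquiv B) (sumEquiv B) =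
      fromBlocks (P.submatrix Subtype.val Subtype.val) (P.submatrix Subtype.val Subtype.val)
        (P.submatrix Subtype.val Subtype.val) (P.submatrix Subtype.val Subtype.val) := by
  ext (i | i) (j | j) <;> rfl

theorem isoRed_specInv_eq_schur_add_X_smul_one {n : ℕ}
    (M : Matrix (Fin n) (Fin n) (RatFunc ℂ))
    (hdeg : ∀ i j, (M i j).intDegree ≤ 0)
    (B : Finset (Fin n)) (hB : B.Nonempty) (hBproper : B ≠ Finset.univ) :
    IsUnit ((M - (RatFunc.X : RatFunc ℂ) • 1)⁻¹.submatrix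
        (Subtype.val : ↥Bᶜ → Fin n) (Subtype.val : ↥Bᶜ → Fin n)) ∧
    isoRed (specInv M) B =
      ((M - (RatFunc.X : RatFunc ℂ) • 1)⁻¹.submatrix
          (Subtype.val : ↥B → Fin n) (Subtype.val : ↥B → Fin n) -
        (M - (RatFunc.X : RatFunc ℂ) • 1)⁻¹.submatrix
          (Subtype.val : ↥B → Fin n) (Subtype.val : ↥Bᶜ → Fin n) *
          ((M - (RatFunc.X : RatFunc ℂ) • 1)⁻¹.submatrix
            (Subtype.val : ↥Bᶜ → Fin n) (Subtype.val : ↥Bᶜ → Fin n))⁻¹ *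
          (M - (RatFunc.X : RatFunc ℂ) • 1)⁻¹.submatrix
            (Subtype.val : ↥Bᶜ → Fin n) (Subtype.val : ↥B → Fin n)) +
        (RatFunc.X : RatFunc ℂ) • 1 := by
  set X : RatFunc ℂ := RatFunc.X with hX
  set N : Matrix (Fin n) (Fin n) (RatFunc ℂ) := M - X • 1 with hN
  set A : Matrix (Fin n) (Fin n) (RatFunc ℂ) := N⁻¹ with hA
  set cB : ↥B → Fin n := Subtype.val
  set cI : ↥(Bᶜ : Finset (Fin n)) → Fin n := Subtype.val
  -- block pieces of N
  set N₁₁ := N.submatrix cB cB with hN11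
  set N₁₂ := N.submatrix cB cI with hN12
  set N₂₁ := N.submatrix cI cB with hN21
  set N₂₂ := N.submatrix cI cI with hN22
  have hNdet : IsUnit N.det := detNeZero M hdeg
  haveI : Invertible N := N.invertibleOfIsUnitDet hNdet
  set e := sumEquiv B with he
  have hblocks : N.submatrix e e = fromBlocks N₁₁ N₁₂ N₂₁ N₂₂ := submatrix_sumEquiv B N
  have hN'det : IsUnit (fromBlocks N₁₁ N₁₂ N₂₁ N₂₂).det := by
    rw [← hblocks, Matrix.det_submatrix_equiv_self]; exact hNdet
  haveI instN' : Invertible (fromBlocks N₁₁ N₁₂ N₂₁ N₂₂) :=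
    Matrix.invertibleOfIsUnitDet _ hN'det
  -- N₁₁ is invertible by the degree lemma on the submatrix of M
  have hN11eq : N₁₁ = M.submatrix cB cB - X • 1 := by
    ext i j
    simp only [hN11, Matrix.submatrix_apply, Matrix.sub_apply, Matrix.smul_apply,
      Matrix.one_apply, hN]
    by_cases hij : i = j
    · subst hij; simp
    · rw [if_neg (fun h => hij (Subtype.val_injective h)), if_neg hij]
  have hN11det : IsUnit N₁₁.det := by
    rw [hN11eq]
    exact detNeZero (M.submatrix cB cB) (fun i j => hdeg _ _)
  haveI : Invertible N₁₁ := Matrix.invertibleOfIsUnitDet _ hN11det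
  haveI instS : Invertible (N₂₂ - N₂₁ * ⅟N₁₁ * N₁₂) :=
    Matrix.invertibleOfFromBlocks₁₁Invertible N₁₁ N₁₂ N₂₁ N₂₂
  -- identify A_II with the inverse of the Schur complement
  have hAsub : A.submatrix e e = (fromBlocks N₁₁ N₁₂ N₂₁ N₂₂)⁻¹ := by
    rw [← hblocks, hA]
    rw [show N.submatrix (⇑e) (⇑e) = (Matrix.reindex e.symm e.symm) N by
      simp [Matrix.reindex_apply]]
    rw [Matrix.inv_reindex]
    simp [Matrix.reindex_apply]
  have hinvblocks : (fromBlocks N₁₁ N₁₂ N₂₁ N₂₂)⁻¹ =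
      fromBlocks (⅟ N₁₁ + ⅟ N₁₁ * N₁₂ * ⅟ (N₂₂ - N₂₁ * ⅟ N₁₁ * N₁₂) * N₂₁ * ⅟ N₁₁)
        (-(⅟ N₁₁ * N₁₂ * ⅟ (N₂₂ - N₂₁ * ⅟ N₁₁ * N₁₂)))
        (-(⅟ (N₂₂ - N₂₁ * ⅟ N₁₁ * N₁₂) * N₂₁ * ⅟ N₁₁)) (⅟ (N₂₂ - N₂₁ * ⅟ N₁₁ * N₁₂)) := by
    rw [← Matrix.invOf_eq_nonsing_inv]
    exact Matrix.invOf_fromBlocks₁₁_eq N₁₁ N₁₂ N₂₁ N₂₂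
  have hAII : A.submatrix cI cI = ⅟ (N₂₂ - N₂₁ * ⅟ N₁₁ * N₁₂) := by
    have : A.submatrix cI cI = (A.submatrix e e).toBlocks₂₂ := by
      ext i j; rfl
    rw [this, hAsub, hinvblocks, Matrix.toBlocks_fromBlocks₂₂]
  have hUnit : IsUnit (A.submatrix cI cI) := by
    rw [hAII]; exact isUnit_of_invertible _
  refine ⟨hUnit, ?_⟩
  -- algebraic identity
  have h1BI : (1 : Matrix (Fin n) (Fin n) (RatFunc ℂ)).submatrix cB cI = 0 := by
    ext i j
    have : (i : Fin n) ≠ (j : Fin n) := by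
      intro h
      exact (Finset.mem_compl.mp j.2) (h ▸ i.2)
    simp [Matrix.one_apply, this]
    exact this
  have h1IB : (1 : Matrix (Fin n) (Fin n) (RatFunc ℂ)).submatrix cI cB = 0 := by
    ext i j
    have : (i : Fin n) ≠ (j : Fin n) := by
      intro h
      exact (Finset.mem_compl.mp i.2) (h ▸ j.2)
    simp [Matrix.one_apply, this]
    exact this
  have h1BB : (1 : Matrix (Fin n) (Fin n) (RatFunc ℂ)).submatrix cB cB = 1 := by
    ext i j
    simp only [Matrix.submatrix_apply, Matrix.one_apply]
    by_cases hij : i = j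
    · subst hij; simp
    · rw [if_neg (fun h => hij (Subtype.val_injective h)), if_neg hij]
  have h1II : (1 : Matrix (Fin n) (Fin n) (RatFunc ℂ)).submatrix cI cI = 1 := by
    ext i j
    simp only [Matrix.submatrix_apply, Matrix.one_apply]
    by_cases hij : i = j
    · subst hij; simp
    · rw [if_neg (fun h => hij (Subtype.val_injective h)), if_neg hij]
  have hspec : specInv M = A + X • 1 := rfl
  rw [isoRed, hspec]
  simp only [Matrix.submatrix_add, Matrix.submatrix_smul, Pi.add_apply, Pi.smul_apply]
  rw [show ((1 : Matrix (Fin n) (Fin n) (RatFunc ℂ)).submatrix cB cI) = 0 from h1BI,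
    show ((1 : Matrix (Fin n) (Fin n) (RatFunc ℂ)).submatrix cI cB) = 0 from h1IB,
    show ((1 : Matrix (Fin n) (Fin n) (RatFunc ℂ)).submatrix cB cB) = 1 from h1BB,
    show ((1 : Matrix (Fin n) (Fin n) (RatFunc ℂ)).submatrix cI cI) = 1 from h1II]
  simp only [smul_zero, add_zero, hX]
  rw [add_sub_cancel_right]
  abel
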